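/- Let B be a real P×Q matrix with singular values σ₁(B) ≥ … ≥ σ_{min(P,Q)}(B), and let S = diag(s₁, …, s_P) with s₁ ≥ s₂ ≥ … ≥ s_P > 0. Then for every P×P real orthogonal matrix U, ‖S⁻¹ Uᵀ B‖_F² ≥ Σ_{j=1}^{min(P,Q)} σ_j(B)²/s_j², and this bound is attained: the minimum of ‖S⁻¹ Uᵀ B‖_F² over all orthogonal U equals Σ_{j=1}^{min(P,Q)} σ_j(B)²/s_j², attained when the columns of U are left singular vectors of B ordered by decreasing singular value. (This is the alignment step in the proof of the paper's equivalent-optimization lemma.) -/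

import Mathlib

open Matrix Set

noncomputable section

/-- An admissible penalty: nonnegative, minimized at `ω 1 = 0`, strictly decreasing on `(0,1]`
and strictly increasing on `[1,∞)`. -/
def Admissible (ω : ℝ → ℝ) : Prop :=
  (∀ x, 0 ≤ ω x) ∧ ω 1 = 0 ∧ StrictAntiOn ω (Set.Ioc 0 1) ∧ StrictMonoOn ω (Set.Ici 1)

/-- The scalar effective penalty `ω̃ v = inf_{z ≥ 1} (ω z + v² / z²)`. -/
def effPenalty (ω : ℝ → ℝ) (v : ℝ) : ℝ :=
  sInf ((fun z => ω z + v ^ 2 / z ^ 2) '' Set.Ici (1 : ℝ))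

/-- The joint penalty `(ω₁ ⊕ ω₂) v = inf_{1 ≤ z ≤ v} (ω₁ z + ω₂ (v / z))`. -/
def jointPenalty (ω₁ ω₂ : ℝ → ℝ) (v : ℝ) : ℝ :=
  sInf ((fun z => ω₁ z + ω₂ (v / z)) '' Set.Icc (1 : ℝ) v)

/-- The (unordered) singular values of a real `P × Q` matrix: square roots of the
eigenvalues of `Xᴴ X`. -/
def svals {P Q : ℕ} (X : Matrix (Fin P) (Fin Q) ℝ) (j : Fin Q) : ℝ :=
  Real.sqrt ((show (Xᵀ * X).IsHermitian by
    simpa [Matrix.conjTranspose_eq_transpose_of_trivial] using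
      Matrix.isHermitian_conjTranspose_mul_self X).eigenvalues j)

/-- Singular values sorted in decreasing order: `svalsDesc X j` is the `j`-th largest
singular value of `X`. -/
def svalsDesc {P Q : ℕ} (X : Matrix (Fin P) (Fin Q) ℝ) (j : Fin Q) : ℝ :=
  svals X (Tuple.sort (fun i => - svals X i) j)

/-- The spectral penalty `Ω_ω M = Σ_j ω (σ_j M)`. -/
def specPenalty (ω : ℝ → ℝ) {P : ℕ} (M : Matrix (Fin P) (Fin P) ℝ) : ℝ :=
  ∑ j, ω (svals M j)

/-- Frobenius norm squared. -/
def frobSq {P Q : ℕ} (X : Matrix (Fin P) (Fin Q) ℝ) : ℝ :=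
  ∑ i, ∑ j, X i j ^ 2

/-- Euclidean norm of a vector. -/
def enorm2 {P : ℕ} (v : Fin P → ℝ) : ℝ :=
  Real.sqrt (∑ j, v j ^ 2)

/-- The induced effective spectral penalty `Ω̃_g B = Σ_{j=1}^{min(P,Q)} g̃(σ_j B)`. -/
def effSpec (g : ℝ → ℝ) {P Q : ℕ} (B : Matrix (Fin P) (Fin Q) ℝ) : ℝ :=
  ∑ j : Fin (min P Q), effPenalty g (svalsDesc B (Fin.castLE (min_le_right P Q) j))

namespace AlignAux

open Matrix Finset

/-- Abel summation inequality. -/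
lemma abel_ineq (n : ℕ) (c ρ a : ℕ → ℝ)
    (hc : ∀ i j, i ≤ j → j < n → c i ≤ c j)
    (hpart : ∀ k, k ≤ n → ∑ i ∈ range k, ρ i ≤ ∑ i ∈ range k, a i)
    (htot : ∑ i ∈ range n, ρ i = ∑ i ∈ range n, a i) :
    ∑ i ∈ range n, c i * a i ≤ ∑ i ∈ range n, c i * ρ i := by
  have key : ∑ i ∈ range n, c i * (a i - ρ i) ≤ 0 := by
    have hparts := Finset.sum_range_by_parts c (fun i => a i - ρ i) n
    simp only [smul_eq_mul] at hparts
    rw [hparts]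
    have h1 : ∑ i ∈ range n, (a i - ρ i) = 0 := by
      rw [Finset.sum_sub_distrib, htot]; ring
    rw [h1, mul_zero, zero_sub, neg_nonpos]
    apply Finset.sum_nonneg
    intro i hi
    simp only [Finset.mem_range] at hi
    have h2 : 0 ≤ c (i+1) - c i := by
      have := hc i (i+1) (by omega) (by omega)
      linarith
    have h3 : 0 ≤ ∑ j ∈ range (i+1), (a j - ρ j) := by
      rw [Finset.sum_sub_distrib]
      have := hpart (i+1) (by omega)
      linarith
    positivity
  have := Finset.sum_sub_distrib (f := fun i => c i * a i) (g := fun i => c i * ρ i)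
      (s := range n)
  simp only [← mul_sub] at this
  linarith [key, this.symm]

/-- Rearrangement-type bound. -/
lemma rearr_bound (m k : ℕ) (a t : ℕ → ℝ)
    (ha : ∀ i j, i ≤ j → j < m → a j ≤ a i) (ha0 : ∀ j, 0 ≤ a j)
    (ht0 : ∀ j, 0 ≤ t j) (ht1 : ∀ j, t j ≤ 1)
    (htk : ∑ j ∈ range m, t j ≤ (k : ℝ)) :
    ∑ j ∈ range m, a j * t j ≤ ∑ j ∈ range (min k m), a j := by
  rcases le_or_gt m k with h | h
  · rw [min_eq_right h]
    apply Finset.sum_le_sum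
    intro j hj
    nth_rewrite 2 [← mul_one (a j)]
    exact mul_le_mul_of_nonneg_left (ht1 j) (ha0 j)
  · rw [min_eq_left h.le]
    set c := a k with hc
    have hc0 : 0 ≤ c := ha0 k
    have step : ∀ j ∈ range m, a j * t j ≤ (if j < k then a j - c else 0) + c * t j := by
      intro j hj
      simp only [Finset.mem_range] at hj
      by_cases hjk : j < k
      · simp only [if_pos hjk]
        have hac : c ≤ a j := ha j k hjk.le h
        nlinarith [ht0 j, ht1 j]
      · simp only [if_neg hjk]
        have hac : a j ≤ c := ha k j (by omega) hj
        nlinarith [ht0 j]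
    calc ∑ j ∈ range m, a j * t j
        ≤ ∑ j ∈ range m, ((if j < k then a j - c else 0) + c * t j) :=
          Finset.sum_le_sum step
      _ = (∑ j ∈ range m, (if j < k then a j - c else 0)) + c * ∑ j ∈ range m, t j := by
          rw [Finset.sum_add_distrib, Finset.mul_sum]
      _ ≤ (∑ j ∈ range k, (a j - c)) + c * k := by
          have h1 : ∑ j ∈ range m, (if j < k then a j - c else 0) = ∑ j ∈ range k, (a j - c) := by
            rw [← Finset.sum_subset (Finset.range_subset_range.2 h.le)
              (fun x _ hx => if_neg (fun hlt => hx (Finset.mem_range.2 hlt)))]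
            exact Finset.sum_congr rfl (fun x hx => if_pos (Finset.mem_range.1 hx))
          rw [h1]
          have := mul_le_mul_of_nonneg_left htk hc0
          linarith
      _ = ∑ j ∈ range k, a j := by
          rw [Finset.sum_sub_distrib]
          simp only [Finset.sum_const, Finset.card_range, nsmul_eq_mul]
          ring

/-- Sum over `range k` of a `Fin n`-indexed function (extended by junk) equals the sum over the
filter of `Fin n`. -/
lemma sum_range_eq_filter {n : ℕ} (k : ℕ) (hk : k ≤ n) (f : ℕ → ℝ) :
    ∑ i ∈ range k, f i = ∑ i ∈ univ.filter (fun i : Fin n => (i : ℕ) < k), f i := by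
  rw [Finset.sum_filter, Fin.sum_univ_eq_sum_range (fun i => if i < k then f i else 0) n]
  rw [← Finset.sum_subset (Finset.range_subset_range.2 hk)
    (fun x _ hx => if_neg (fun hlt => hx (Finset.mem_range.2 hlt)))]
  exact (Finset.sum_congr rfl (fun x hx => if_pos (Finset.mem_range.1 hx))).symm

section Columns

variable {P Q R : ℕ}

/-- The `j`-th column of a matrix, as a vector of `EuclideanSpace`. -/
def colv (M : Matrix (Fin P) (Fin Q) ℝ) (j : Fin Q) : EuclideanSpace ℝ (Fin P) :=
  WithLp.toLp 2 (fun p => M p j)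

lemma inner_colv (M : Matrix (Fin P) (Fin Q) ℝ) (N : Matrix (Fin P) (Fin R) ℝ)
    (j : Fin Q) (k : Fin R) :
    (inner ℝ (colv M j) (colv N k) : ℝ) = (Mᵀ * N) j k := by
  simp [colv, PiLp.inner_apply, RCLike.inner_apply, Matrix.mul_apply, Matrix.transpose_apply,
    starRingEnd_apply]
  exact Finset.sum_congr rfl (fun _ _ => mul_comm _ _)

lemma orthon_cols (U : Matrix (Fin P) (Fin P) ℝ) (hU : Uᵀ * U = 1) :
    Orthonormal ℝ (fun i => colv U i) := by
  rw [orthonormal_iff_ite]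
  intro i j
  rw [inner_colv, hU]
  simp [Matrix.one_apply]

lemma norm_colv_sq (U : Matrix (Fin P) (Fin P) ℝ) (hU : Uᵀ * U = 1) (i : Fin P) :
    ‖colv U i‖ ^ 2 = 1 := by
  rw [← real_inner_self_eq_norm_sq, inner_colv, hU]
  simp

/-- Row-sum-of-squares is invariant under right multiplication by an orthogonal matrix. -/
lemma rowsq_invariant (M : Matrix (Fin P) (Fin Q) ℝ) (O : Matrix (Fin Q) (Fin Q) ℝ)
    (hO : O * Oᵀ = 1) (i : Fin P) :
    ∑ j, ((M * O) i j) ^ 2 = ∑ j, (M i j) ^ 2 := by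
  have h : (M * O) * (M * O)ᵀ = M * Mᵀ := by
    rw [Matrix.transpose_mul, Matrix.mul_assoc, ← Matrix.mul_assoc O, hO, Matrix.one_mul]
  have h2 := congrFun (congrFun h i) i
  simp only [Matrix.mul_apply, Matrix.transpose_apply] at h2
  simpa [pow_two, Matrix.mul_apply] using h2

end Columns

end AlignAux
namespace AlignAux

open Matrix Finset

variable {P Q : ℕ} (B : Matrix (Fin P) (Fin Q) ℝ)

abbrev hH : (Bᵀ * B).IsHermitian := by
  simpa [Matrix.conjTranspose_eq_transpose_of_trivial] using
    Matrix.isHermitian_conjTranspose_mul_self B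

def perm : Equiv.Perm (Fin Q) := Tuple.sort (fun i => - svals B i)

def Vm : Matrix (Fin Q) (Fin Q) ℝ := (hH B).eigenvectorUnitary

def Vp : Matrix (Fin Q) (Fin Q) ℝ := (Vm B).submatrix id (perm B)

def Cm : Matrix (Fin P) (Fin Q) ℝ := B * Vp B

lemma sigma_nonneg (j : Fin Q) : 0 ≤ svalsDesc B j := Real.sqrt_nonneg _

lemma sigma_antitone : Antitone (svalsDesc B) := by
  intro i j hij
  have := Tuple.monotone_sort (fun i => - svals B i) hij
  simpa [svalsDesc, perm] using this

lemma hVmV : (Vm B)ᵀ * Vm B = 1 := by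
  have h := (Matrix.mem_unitaryGroup_iff').mp ((hH B).eigenvectorUnitary).2
  rwa [Matrix.star_eq_conjTranspose, Matrix.conjTranspose_eq_transpose_of_trivial] at h

lemma hVpV : (Vp B)ᵀ * Vp B = 1 := by
  ext j k
  have h := congrFun (congrFun (hVmV B) (perm B j)) (perm B k)
  simp only [Matrix.mul_apply, Matrix.transpose_apply, Matrix.one_apply] at h ⊢
  simp only [Vp, Matrix.submatrix_apply, id_eq]
  rw [h]
  simp [EmbeddingLike.apply_eq_iff_eq]

lemma hVVp : Vp B * (Vp B)ᵀ = 1 := mul_eq_one_comm.mp (hVpV B)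

lemma hdiag : (Vm B)ᵀ * (Bᵀ * B) * Vm B = diagonal ((hH B).eigenvalues) := by
  have h := (hH B).conjStarAlgAut_star_eigenvectorUnitary
  rw [Unitary.conjStarAlgAut_apply, Unitary.coe_star, star_star, Matrix.star_eq_conjTranspose] at h
  calc (Vm B)ᵀ * (Bᵀ * B) * Vm B = (Vm B)ᴴ * (Bᵀ * B) * Vm B := by
        rw [Matrix.conjTranspose_eq_transpose_of_trivial]
    _ = Matrix.diagonal (RCLike.ofReal ∘ (hH B).eigenvalues) := h
    _ = diagonal ((hH B).eigenvalues) := by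
        simp [RCLike.ofReal_real_eq_id, Function.comp_def]

lemma sigma_sq (j : Fin Q) : svalsDesc B j ^ 2 = (hH B).eigenvalues (perm B j) := by
  rw [svalsDesc, svals]
  exact Real.sq_sqrt (Matrix.eigenvalues_conjTranspose_mul_self_nonneg B _)

lemma hCtC : (Cm B)ᵀ * Cm B = diagonal (fun j => svalsDesc B j ^ 2) := by
  have key : (Cm B)ᵀ * Cm B = (Vp B)ᵀ * (Bᵀ * B) * Vp B := by
    simp only [Cm, Matrix.transpose_mul, Matrix.mul_assoc]
  rw [key]
  ext j k
  have h := congrFun (congrFun (hdiag B) (perm B j)) (perm B k)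
  simp only [Matrix.mul_apply, Matrix.transpose_apply, Matrix.diagonal_apply] at h ⊢
  simp only [Vp, Matrix.submatrix_apply, id_eq]
  rw [h]
  by_cases hjk : j = k
  · simp [hjk, sigma_sq]
  · simp [hjk, fun h => hjk ((perm B).injective h)]

lemma hBC : Cm B * (Vp B)ᵀ = B := by
  rw [Cm, Matrix.mul_assoc, hVVp, Matrix.mul_one]

lemma inner_colC (j k : Fin Q) :
    (inner ℝ (colv (Cm B) j) (colv (Cm B) k) : ℝ)
      = if j = k then svalsDesc B j ^ 2 else 0 := by
  rw [inner_colv, hCtC]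
  simp [Matrix.diagonal_apply]

lemma colC_eq_zero (j : Fin Q) (h : svalsDesc B j = 0) : colv (Cm B) j = 0 := by
  have h2 := inner_colC B j j
  rw [if_pos rfl, h] at h2
  norm_num at h2
  exact h2

/-- Normalized columns of `Cm B`. -/
def wv (j : Fin Q) : EuclideanSpace ℝ (Fin P) := (svalsDesc B j)⁻¹ • colv (Cm B) j

lemma inner_wv (j k : Fin Q) (hj : 0 < svalsDesc B j) (hk : 0 < svalsDesc B k) :
    (inner ℝ (wv B j) (wv B k) : ℝ) = if j = k then 1 else 0 := by
  rw [wv, wv, real_inner_smul_left, real_inner_smul_right, inner_colC]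
  by_cases hjk : j = k
  · subst hjk
    rw [if_pos rfl, if_pos rfl]
    field_simp
  · rw [if_neg hjk, if_neg hjk]
    ring

lemma colC_eq_smul (j : Fin Q) (hj : 0 < svalsDesc B j) :
    colv (Cm B) j = svalsDesc B j • wv B j := by
  rw [wv, smul_smul, mul_inv_cancel₀ hj.ne', one_smul]

lemma norm_wv (j : Fin Q) (hj : 0 < svalsDesc B j) : ‖wv B j‖ ^ 2 = 1 := by
  rw [← real_inner_self_eq_norm_sq, inner_wv B j j hj hj, if_pos rfl]

lemma orthonW : Orthonormal ℝ (fun j : {j : Fin Q // 0 < svalsDesc B j} => wv B j.1) := by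
  rw [orthonormal_iff_ite]
  intro i j
  rw [inner_wv B i.1 j.1 i.2 j.2]
  simp [Subtype.ext_iff, Fin.ext_iff]

lemma sigma_zero (j : Fin Q) (hj : P ≤ (j : ℕ)) : svalsDesc B j = 0 := by
  by_contra hne
  have hpos : 0 < svalsDesc B j := lt_of_le_of_ne (sigma_nonneg B j) (Ne.symm hne)
  have hcard : Fintype.card {j : Fin Q // 0 < svalsDesc B j} ≤ P := by
    have h1 := (orthonW B).linearIndependent.fintype_card_le_finrank
    rwa [finrank_euclideanSpace, Fintype.card_fin] at h1
  have hinj : Function.Injective (fun i : Fin (P + 1) =>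
      (⟨⟨(i : ℕ), lt_of_le_of_lt (Nat.le_of_lt_succ (lt_of_lt_of_le i.isLt (by omega))) j.isLt⟩,
        lt_of_lt_of_le hpos (sigma_antitone B (by
          simp only [Fin.le_iff_val_le_val]
          exact Nat.le_of_lt_succ (lt_of_lt_of_le i.isLt (by omega))))⟩ :
        {j : Fin Q // 0 < svalsDesc B j})) := by
    intro x y hxy
    simpa [Subtype.ext_iff, Fin.ext_iff] using hxy
  have := Fintype.card_le_of_injective _ hinj
  rw [Fintype.card_fin] at this
  omega

end AlignAux
namespace AlignAux

open Matrix Finset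

variable {P Q : ℕ} (B : Matrix (Fin P) (Fin Q) ℝ)

/-- `ℕ`-extended squared singular values (decreasing). -/
def aN : ℕ → ℝ := fun m => if h : m < Q then svalsDesc B ⟨m, h⟩ ^ 2 else 0

lemma aN_nonneg (m : ℕ) : 0 ≤ aN B m := by
  unfold aN; split
  · positivity
  · exact le_rfl

lemma aN_antitone (i j : ℕ) (hij : i ≤ j) : aN B j ≤ aN B i := by
  unfold aN
  by_cases hj : j < Q
  · have hi : i < Q := lt_of_le_of_lt hij hj
    rw [dif_pos hj, dif_pos hi]
    have h1 : svalsDesc B ⟨j, hj⟩ ≤ svalsDesc B ⟨i, hi⟩ :=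
      sigma_antitone B (by simpa [Fin.le_iff_val_le_val] using hij)
    have h0 := sigma_nonneg B ⟨j, hj⟩
    nlinarith
  · rw [dif_neg hj]
    exact aN_nonneg B i

lemma aN_zero (m : ℕ) (hm : min P Q ≤ m) : aN B m = 0 := by
  unfold aN
  by_cases hj : m < Q
  · rw [dif_pos hj]
    have hP : P ≤ m := by omega
    rw [sigma_zero B ⟨m, hj⟩ hP]
    ring
  · rw [dif_neg hj]

lemma sum_aN (n : ℕ) (hn : min P Q ≤ n) :
    ∑ i ∈ range n, aN B i = ∑ i ∈ range (min P Q), aN B i := by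
  rw [← Finset.sum_subset (Finset.range_subset_range.2 hn)]
  intro x hx hnx
  exact aN_zero B x (by simpa using Nat.le_of_not_lt (fun h => hnx (Finset.mem_range.2 h)))

lemma aN_val (j : Fin Q) : aN B (j : ℕ) = svalsDesc B j ^ 2 := by
  unfold aN
  rw [dif_pos j.isLt, Fin.eta]

lemma sum_sigma_sq : ∑ j : Fin Q, svalsDesc B j ^ 2 = ∑ i ∈ range Q, aN B i := by
  rw [← Fin.sum_univ_eq_sum_range (aN B) Q]
  apply Finset.sum_congr rfl
  intro j _
  rw [aN_val]

section WithU

variable (U : Matrix (Fin P) (Fin P) ℝ)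

/-- Squared row norms of `Uᵀ * Cm B`. -/
def rho : Fin P → ℝ := fun i => ∑ j, ((Uᵀ * Cm B) i j) ^ 2

def rhoN : ℕ → ℝ := fun m => if h : m < P then rho B U ⟨m, h⟩ else 0

lemma rhoN_val (i : Fin P) : rhoN B U (i : ℕ) = rho B U i := by
  unfold rhoN
  rw [dif_pos i.isLt, Fin.eta]

lemma rho_def (i : Fin P) : rho B U i = ∑ j, ((Uᵀ * Cm B) i j) ^ 2 := rfl

lemma rho_total (hU : Uᵀ * U = 1) :
    ∑ i : Fin P, rho B U i = ∑ j : Fin Q, svalsDesc B j ^ 2 := by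
  have hMtM : (Uᵀ * Cm B)ᵀ * (Uᵀ * Cm B) = diagonal (fun j => svalsDesc B j ^ 2) := by
    rw [Matrix.transpose_mul, Matrix.transpose_transpose, Matrix.mul_assoc,
      ← Matrix.mul_assoc U, mul_eq_one_comm.mp hU, Matrix.one_mul, hCtC]
  unfold rho
  rw [Finset.sum_comm]
  apply Finset.sum_congr rfl
  intro j _
  have h := congrFun (congrFun hMtM j) j
  simp only [Matrix.mul_apply, Matrix.transpose_apply, Matrix.diagonal_apply_eq] at h
  rw [← h]
  apply Finset.sum_congr rfl
  intro i _
  rw [Matrix.mul_apply]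
  simp only [Matrix.transpose_apply]
  ring

lemma MC_entry (i : Fin P) (j : Fin Q) :
    (Uᵀ * Cm B) i j = (inner ℝ (colv U i) (colv (Cm B) j) : ℝ) :=
  (inner_colv U (Cm B) i j).symm

def tau (i : Fin P) (j : Fin Q) : ℝ :=
  if 0 < svalsDesc B j then (inner ℝ (colv U i) (wv B j) : ℝ) ^ 2 else 0

lemma tau_nonneg (i : Fin P) (j : Fin Q) : 0 ≤ tau B U i j := by
  unfold tau; split
  · positivity
  · exact le_rfl

lemma sq_entry (i : Fin P) (j : Fin Q) :
    ((Uᵀ * Cm B) i j) ^ 2 = svalsDesc B j ^ 2 * tau B U i j := by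
  rcases lt_or_eq_of_le (sigma_nonneg B j) with hpos | hzero
  · rw [MC_entry, colC_eq_smul B j hpos, real_inner_smul_right, tau, if_pos hpos]
    ring
  · rw [MC_entry, colC_eq_zero B j hzero.symm, inner_zero_right, ← hzero]
    ring

lemma partial_bound (hU : Uᵀ * U = 1) (k : ℕ) (hk : k ≤ P) :
    ∑ i ∈ range k, rhoN B U i ≤ ∑ j ∈ range (min k Q), aN B j := by
  classical
  set s' : Finset (Fin P) := univ.filter (fun i : Fin P => (i : ℕ) < k) with hs'
  set tN : ℕ → ℝ := fun m => if h : m < Q then ∑ i ∈ s', tau B U i ⟨m, h⟩ else 0 with htN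
  have htNval : ∀ j : Fin Q, tN (j : ℕ) = ∑ i ∈ s', tau B U i j := by
    intro j
    simp only [htN]
    rw [dif_pos j.isLt, Fin.eta]
  have hstep1 : ∑ i ∈ range k, rhoN B U i = ∑ j ∈ range Q, aN B j * tN j := by
    rw [sum_range_eq_filter k hk (rhoN B U)]
    have h1 : ∀ i ∈ s', rhoN B U (i : ℕ) = ∑ j : Fin Q, svalsDesc B j ^ 2 * tau B U i j := by
      intro i _
      rw [rhoN_val, rho_def]
      exact Finset.sum_congr rfl (fun j _ => sq_entry B U i j)
    rw [Finset.sum_congr rfl h1, Finset.sum_comm]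
    rw [← Fin.sum_univ_eq_sum_range (fun m => aN B m * tN m) Q]
    apply Finset.sum_congr rfl
    intro j _
    rw [aN_val, htNval, Finset.mul_sum]
  rw [hstep1]
  apply rearr_bound Q k (aN B) tN (fun i j hij _ => aN_antitone B i j hij) (aN_nonneg B)
  · -- 0 ≤ tN
    intro j
    simp only [htN]
    split
    · exact Finset.sum_nonneg (fun i _ => tau_nonneg B U i _)
    · exact le_rfl
  · -- tN ≤ 1
    intro m
    simp only [htN]
    split
    · next h =>
      set j : Fin Q := ⟨m, h⟩
      rcases lt_or_eq_of_le (sigma_nonneg B j) with hpos | hzero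
      · have hbessel := Orthonormal.sum_inner_products_le (s := s') (wv B j)
          (orthon_cols U hU)
        have heq : ∑ i ∈ s', tau B U i j
            = ∑ i ∈ s', ‖(inner ℝ (colv U i) (wv B j) : ℝ)‖ ^ 2 := by
          apply Finset.sum_congr rfl
          intro i _
          rw [tau, if_pos hpos, Real.norm_eq_abs, sq_abs]
        rw [heq]
        calc _ ≤ ‖wv B j‖ ^ 2 := hbessel
          _ = 1 := norm_wv B j hpos
      · have : ∀ i ∈ s', tau B U i j = 0 := by
          intro i _
          rw [tau, if_neg (by rw [← hzero]; exact lt_irrefl 0)]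
        rw [Finset.sum_congr rfl this]
        simp
    · norm_num
  · -- column sums bounded by k
    have h1 : ∑ j ∈ range Q, tN j = ∑ i ∈ s', ∑ j : Fin Q, tau B U i j := by
      rw [← Fin.sum_univ_eq_sum_range tN Q]
      rw [Finset.sum_comm]
      apply Finset.sum_congr rfl
      intro j _
      exact htNval j
    rw [h1]
    have h2 : ∀ i ∈ s', ∑ j : Fin Q, tau B U i j ≤ 1 := by
      intro i _
      have hsplit : ∑ j : Fin Q, tau B U i j
          = ∑ j : {j : Fin Q // 0 < svalsDesc B j},
              ‖(inner ℝ (wv B j.1) (colv U i) : ℝ)‖ ^ 2 := by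
        rw [← Finset.sum_filter_add_sum_filter_not univ (fun j => 0 < svalsDesc B j)]
        have hz : ∑ j ∈ univ.filter (fun j => ¬ 0 < svalsDesc B j), tau B U i j = 0 := by
          apply Finset.sum_eq_zero
          intro j hj
          rw [tau, if_neg (Finset.mem_filter.mp hj).2]
        rw [hz, add_zero]
        rw [Finset.sum_subtype (p := fun j : Fin Q => 0 < svalsDesc B j)
          (univ.filter (fun j => 0 < svalsDesc B j))
          (by intro x; simp) (fun j => tau B U i j)]
        apply Finset.sum_congr rfl
        intro j _
        rw [tau, if_pos j.2, real_inner_comm, Real.norm_eq_abs, sq_abs]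
      rw [hsplit]
      calc _ ≤ ‖colv U i‖ ^ 2 :=
            Orthonormal.sum_inner_products_le (s := univ) (colv U i) (orthonW B)
        _ = 1 := norm_colv_sq U hU i
    calc ∑ i ∈ s', ∑ j : Fin Q, tau B U i j ≤ ∑ i ∈ s', (1 : ℝ) := Finset.sum_le_sum h2
      _ = (k : ℝ) := by
          rw [hs', ← sum_range_eq_filter k hk (fun _ => (1 : ℝ))]
          simp

end WithU

end AlignAux
namespace AlignAux

open Matrix Finset

variable {P Q : ℕ} (B : Matrix (Fin P) (Fin Q) ℝ) (s : Fin P → ℝ)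

def ccN : ℕ → ℝ := fun m => if h : m < P then (s ⟨m, h⟩)⁻¹ ^ 2 else 0

lemma ccN_val (i : Fin P) : ccN s (i : ℕ) = (s i)⁻¹ ^ 2 := by
  unfold ccN
  rw [dif_pos i.isLt, Fin.eta]

lemma ccN_mono (hs : Antitone s) (hpos : ∀ i, 0 < s i) (i j : ℕ) (hij : i ≤ j) (hj : j < P) :
    ccN s i ≤ ccN s j := by
  have hi : i < P := lt_of_le_of_lt hij hj
  unfold ccN
  rw [dif_pos hi, dif_pos hj]
  have h1 : s ⟨j, hj⟩ ≤ s ⟨i, hi⟩ := hs (by simpa [Fin.le_iff_val_le_val] using hij)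
  have h2 : (s ⟨i, hi⟩)⁻¹ ≤ (s ⟨j, hj⟩)⁻¹ := by
    apply inv_anti₀ (hpos _) h1
  have h3 : 0 ≤ (s ⟨i, hi⟩)⁻¹ := le_of_lt (inv_pos.2 (hpos _))
  nlinarith

lemma diag_inv (hpos : ∀ i, 0 < s i) :
    (Matrix.diagonal s)⁻¹ = Matrix.diagonal (fun i => (s i)⁻¹) := by
  apply Matrix.inv_eq_right_inv
  rw [Matrix.diagonal_mul_diagonal]
  have : (fun i => s i * (s i)⁻¹) = fun _ => (1 : ℝ) := by
    funext i
    exact mul_inv_cancel₀ (hpos i).ne'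
  rw [this, Matrix.diagonal_one]

lemma frob_eq (U : Matrix (Fin P) (Fin P) ℝ) (hU : Uᵀ * U = 1) (hpos : ∀ i, 0 < s i) :
    frobSq ((Matrix.diagonal s)⁻¹ * Uᵀ * B) = ∑ i : Fin P, (s i)⁻¹ ^ 2 * rho B U i := by
  rw [Matrix.mul_assoc, diag_inv s hpos]
  unfold frobSq
  apply Finset.sum_congr rfl
  intro i _
  have hUB : Uᵀ * B = (Uᵀ * Cm B) * (Vp B)ᵀ := by
    rw [Matrix.mul_assoc, hBC]
  have hrow : ∑ j, ((Uᵀ * B) i j) ^ 2 = rho B U i := by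
    rw [hUB, rho_def]
    exact rowsq_invariant (Uᵀ * Cm B) (Vp B)ᵀ
      (by rw [Matrix.transpose_transpose]; exact hVpV B) i
  rw [← hrow, Finset.mul_sum]
  apply Finset.sum_congr rfl
  intro j _
  rw [Matrix.diagonal_mul, mul_pow]

def sSet : Set (Fin P) := {i : Fin P | ∃ h : (i : ℕ) < Q, 0 < svalsDesc B ⟨(i : ℕ), h⟩}

def vfun (i : Fin P) : EuclideanSpace ℝ (Fin P) :=
  if h : (i : ℕ) < Q then wv B ⟨(i : ℕ), h⟩ else 0

lemma orthon_v : Orthonormal ℝ ((sSet B).restrict (vfun B)) := by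
  rw [orthonormal_iff_ite]
  rintro ⟨x, hxQ, hxpos⟩ ⟨y, hyQ, hypos⟩
  have hx : (sSet B).restrict (vfun B) ⟨x, hxQ, hxpos⟩ = wv B ⟨(x : ℕ), hxQ⟩ := by
    show vfun B x = _
    unfold vfun
    rw [dif_pos hxQ]
  have hy : (sSet B).restrict (vfun B) ⟨y, hyQ, hypos⟩ = wv B ⟨(y : ℕ), hyQ⟩ := by
    show vfun B y = _
    unfold vfun
    rw [dif_pos hyQ]
  rw [hx, hy, inner_wv B _ _ hxpos hypos]
  have hiff : ((⟨(x : ℕ), hxQ⟩ : Fin Q) = ⟨(y : ℕ), hyQ⟩)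
      ↔ ((⟨x, hxQ, hxpos⟩ : (sSet B)) = ⟨y, hyQ, hypos⟩) := by
    rw [Fin.ext_iff, Subtype.ext_iff, Fin.ext_iff]
  rw [if_congr hiff rfl rfl]

lemma endgame :
    ∑ j : Fin (min P Q), (svalsDesc B (Fin.castLE (min_le_right P Q) j)) ^ 2
        / (s (Fin.castLE (min_le_left P Q) j)) ^ 2
      = ∑ i ∈ range P, ccN s i * aN B i := by
  have hz : ∀ x ∈ range P, x ∉ range (min P Q) → ccN s x * aN B x = 0 := by
    intro x _ hx
    rw [aN_zero B x (Nat.le_of_not_lt (fun h => hx (Finset.mem_range.2 h))), mul_zero]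
  rw [← Finset.sum_subset (Finset.range_subset_range.2 (min_le_left P Q)) hz]
  rw [← Fin.sum_univ_eq_sum_range (fun m => ccN s m * aN B m) (min P Q)]
  apply Finset.sum_congr rfl
  intro j _
  have hjP : (j : ℕ) < P := lt_of_lt_of_le j.isLt (min_le_left P Q)
  have hjQ : (j : ℕ) < Q := lt_of_lt_of_le j.isLt (min_le_right P Q)
  unfold ccN aN
  rw [dif_pos hjP, dif_pos hjQ]
  have h1 : (Fin.castLE (min_le_left P Q) j) = (⟨(j : ℕ), hjP⟩ : Fin P) := rfl
  have h2 : (Fin.castLE (min_le_right P Q) j) = (⟨(j : ℕ), hjQ⟩ : Fin Q) := rfl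
  rw [h1, h2, inv_pow, ← div_eq_inv_mul]

end AlignAux

open Finset AlignAux

/-- alignment step of the equivalent-optimization lemma. For a diagonal
matrix `S` with positive nonincreasing diagonal `s`, the Frobenius norm `‖S⁻¹ Uᵀ B‖_F²` over
orthogonal `U` is at least `Σ_j σ_j(B)²/s_j²`, and this bound is attained. -/
theorem alignment_step {P Q : ℕ} (B : Matrix (Fin P) (Fin Q) ℝ)
    (s : Fin P → ℝ) (hs : Antitone s) (hpos : ∀ i, 0 < s i) :
    (∀ U ∈ Matrix.orthogonalGroup (Fin P) ℝ,
      ∑ j : Fin (min P Q), (svalsDesc B (Fin.castLE (min_le_right P Q) j)) ^ 2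
          / (s (Fin.castLE (min_le_left P Q) j)) ^ 2
        ≤ frobSq ((Matrix.diagonal s)⁻¹ * Uᵀ * B)) ∧
    (∃ U ∈ Matrix.orthogonalGroup (Fin P) ℝ,
      frobSq ((Matrix.diagonal s)⁻¹ * Uᵀ * B)
        = ∑ j : Fin (min P Q), (svalsDesc B (Fin.castLE (min_le_right P Q) j)) ^ 2
          / (s (Fin.castLE (min_le_left P Q) j)) ^ 2) := by
  classical
  constructor
  · -- lower bound
    intro U hU
    rw [Matrix.mem_orthogonalGroup_iff'] at hU
    rw [frob_eq B s U hU hpos, endgame B s]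
    have hrhs : ∑ i : Fin P, (s i)⁻¹ ^ 2 * rho B U i
        = ∑ i ∈ range P, ccN s i * rhoN B U i := by
      rw [← Fin.sum_univ_eq_sum_range (fun m => ccN s m * rhoN B U m) P]
      exact Finset.sum_congr rfl (fun i _ => by rw [ccN_val, rhoN_val])
    rw [hrhs]
    apply abel_ineq P (ccN s) (rhoN B U) (aN B) (ccN_mono s hs hpos)
    · -- partial sums
      intro k hk
      have h1 := partial_bound B U hU k hk
      have h2 : ∑ j ∈ range k, aN B j = ∑ j ∈ range (min k Q), aN B j := by
        rw [← Finset.sum_subset (Finset.range_subset_range.2 (min_le_left k Q))]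
        intro x hx hnx
        apply aN_zero
        have hxk := Finset.mem_range.1 hx
        have := Nat.le_of_not_lt (fun h => hnx (Finset.mem_range.2 h))
        omega
      rw [h2]
      exact h1
    · -- totals
      have h1 : ∑ i ∈ range P, rhoN B U i = ∑ i : Fin P, rho B U i := by
        rw [← Fin.sum_univ_eq_sum_range (rhoN B U) P]
        exact Finset.sum_congr rfl (fun i _ => by rw [rhoN_val])
      rw [h1, rho_total B U hU, sum_sigma_sq, sum_aN B Q (min_le_right P Q),
        ← sum_aN B P (min_le_left P Q)]
  · -- attainment
    obtain ⟨b, hb⟩ := (orthon_v B).exists_orthonormalBasis_extension_of_card_eq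
      (by rw [finrank_euclideanSpace, Fintype.card_fin])
    set U : Matrix (Fin P) (Fin P) ℝ := Matrix.of (fun p i => b i p) with hUdef
    have hcol : ∀ i, colv U i = b i := fun i => rfl
    have hU : Uᵀ * U = 1 := by
      ext i j
      rw [← inner_colv U U i j, hcol, hcol, orthonormal_iff_ite.mp b.orthonormal i j,
        Matrix.one_apply]
    have hUC : ∀ (i : Fin P) (j : Fin Q),
        (Uᵀ * Cm B) i j = if (i : ℕ) = (j : ℕ) then svalsDesc B j else 0 := by
      intro i j
      rw [MC_entry]
      rcases lt_or_eq_of_le (sigma_nonneg B j) with hp | hzero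
      · have hjP : (j : ℕ) < P := by
          by_contra h
          have := sigma_zero B j (Nat.le_of_not_lt h)
          rw [this] at hp
          exact lt_irrefl 0 hp
        have hmem : (⟨(j : ℕ), hjP⟩ : Fin P) ∈ sSet B :=
          ⟨j.isLt, by rw [Fin.eta]; exact hp⟩
        have hbj : b ⟨(j : ℕ), hjP⟩ = wv B j := by
          rw [hb _ hmem]
          unfold vfun
          rw [dif_pos j.isLt, Fin.eta]
        rw [colC_eq_smul B j hp, real_inner_smul_right, hcol, ← hbj,
          orthonormal_iff_ite.mp b.orthonormal i ⟨(j : ℕ), hjP⟩]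
        have hiff : (i = (⟨(j : ℕ), hjP⟩ : Fin P)) ↔ ((i : ℕ) = (j : ℕ)) := by
          rw [Fin.ext_iff]
        rw [mul_ite, mul_one, mul_zero, if_congr hiff rfl rfl]
      · rw [colC_eq_zero B j hzero.symm, inner_zero_right, ← hzero]
        simp
    have hrho : ∀ i : Fin P, rho B U i = aN B (i : ℕ) := by
      intro i
      rw [rho_def]
      by_cases hiQ : (i : ℕ) < Q
      · unfold aN
        rw [dif_pos hiQ]
        rw [Finset.sum_eq_single (⟨(i : ℕ), hiQ⟩ : Fin Q)]
        · rw [hUC, if_pos rfl]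
        · intro j _ hj
          rw [hUC, if_neg (fun h => hj (Fin.ext h.symm))]
          ring
        · intro h
          exact absurd (Finset.mem_univ _) h
      · unfold aN
        rw [dif_neg hiQ]
        apply Finset.sum_eq_zero
        intro j _
        rw [hUC, if_neg (fun h => hiQ (lt_of_eq_of_lt h j.isLt))]
        ring
    refine ⟨U, ?_, ?_⟩
    · rw [Matrix.mem_orthogonalGroup_iff']
      exact hU
    · rw [frob_eq B s U hU hpos, endgame B s,
        ← Fin.sum_univ_eq_sum_range (fun m => ccN s m * aN B m) P]
      exact Finset.sum_congr rfl (fun i _ => by rw [ccN_val, hrho])
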